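/- arXiv:2306.01541 — 3 statements merged into one kernel-verified Lean document; each statement's English description precedes it below -/
import Mathlib

section
/- Let d ≥ 1, let p be a prime with p ≥ d, and let k = (k₁,...,k_d) ∈ ℤ^d be nonzero with at least one coordinate not divisible by p. Then |(1/p²)·∑_{h=0}^{p−1}∑_{ℓ=0}^{p−1} exp(2πi·∑_{j=1}^d k_j·h·ℓ^j/p)| ≤ width(supp(k))/p, where width(supp(k)) = max supp(k) − min supp(k) + 1 and supp(k) = {j : k_j ≠ 0}. -/
open Finset

noncomputable section

/-- The support of a frequency vector. -/
def supp {d : ℕ} (k : Fin d → ℤ) : Finset (Fin d) :=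
  Finset.univ.filter (fun j => k j ≠ 0)

/-- `width(supp k) = max supp(k) - min supp(k) + 1`, with value 1 for empty support. -/
def width {d : ℕ} (k : Fin d → ℤ) : ℕ :=
  if h : (supp k).Nonempty then ((supp k).max' h).val - ((supp k).min' h).val + 1 else 1

/-- `min_{j ∈ supp(k)} log |k_j|`, with value 0 for empty support. -/
noncomputable def logmin {d : ℕ} (k : Fin d → ℤ) : ℝ :=
  if h : (supp k).Nonempty then (supp k).inf' h (fun j => Real.log |(k j : ℝ)|) else 0

/-- `exp(2πiz)`. -/
noncomputable def e2pi (z : ℂ) : ℂ := Complex.exp (2 * Real.pi * Complex.I * z)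

lemma sum_e2pi (p : ℕ) (hp : 0 < p) (a : ℤ) :
    ∑ h ∈ Finset.range p, e2pi ((h : ℂ) * (a : ℂ) / p) =
      if (p : ℤ) ∣ a then (p : ℂ) else 0 := by
  have hp0 : (p : ℂ) ≠ 0 := Nat.cast_ne_zero.mpr hp.ne'
  have h2pi : (2 * (Real.pi:ℂ) * Complex.I) ≠ 0 := by
    simp [Real.pi_ne_zero, Complex.I_ne_zero]
  have hz : ∀ h : ℕ, e2pi ((h : ℂ) * a / p)
      = Complex.exp (2 * Real.pi * Complex.I * a / p) ^ h := by
    intro h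
    rw [e2pi, ← Complex.exp_nat_mul]
    ring_nf
  simp_rw [hz]
  set z := Complex.exp (2 * Real.pi * Complex.I * a / p) with hzdef
  by_cases hdvd : (p : ℤ) ∣ a
  · obtain ⟨c, rfl⟩ := hdvd
    have hz1 : z = 1 := by
      rw [hzdef]
      have : (2 * (Real.pi:ℂ) * Complex.I * (((p:ℤ) * c : ℤ):ℂ) / p) = (c:ℤ) * (2 * Real.pi * Complex.I) := by
        push_cast; field_simp
      rw [this, Complex.exp_int_mul_two_pi_mul_I]
    simp [hz1]
  · have hz1 : z ≠ 1 := by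
      intro h1
      rw [hzdef, Complex.exp_eq_one_iff] at h1
      obtain ⟨n, hn⟩ := h1
      apply hdvd
      have h2 : (a : ℂ) = (n:ℂ) * p := by
        field_simp at hn
        exact hn.trans (mul_comm _ _)
      have h3 : a = n * p := by exact_mod_cast h2
      exact ⟨n, by rw [h3]; ring⟩
    rw [geom_sum_eq hz1]
    have hzp : z ^ p = 1 := by
      rw [hzdef, ← Complex.exp_nat_mul]
      have : (p:ℂ) * (2 * Real.pi * Complex.I * a / p) = (a:ℤ) * (2 * Real.pi * Complex.I) := by
        field_simp
      rw [this, Complex.exp_int_mul_two_pi_mul_I]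
    simp [hzp, hdvd]

lemma card_divisors_bound (d p : ℕ) (hp : p.Prime)
    (k : Fin d → ℤ) (hdvd : ∃ j, ¬ (p : ℤ) ∣ k j) :
    ((Finset.range p).filter (fun (l:ℕ) => (p:ℤ) ∣ ∑ j, k j * (l:ℤ)^(j.val+1))).card ≤ width k := by
  classical
  haveI : Fact p.Prime := ⟨hp⟩
  obtain ⟨j₀, hj₀⟩ := hdvd
  have hj₀s : j₀ ∈ supp k := by
    simp only [supp, mem_filter, mem_univ, true_and]
    intro h; exact hj₀ (h ▸ dvd_zero _)
  have hne : (supp k).Nonempty := ⟨j₀, hj₀s⟩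
  set m := (supp k).min' hne with hm
  set M := (supp k).max' hne with hM
  set T := ((Finset.range p).filter (fun (l:ℕ) => (p:ℤ) ∣ ∑ j, k j * (l:ℤ)^(j.val+1))) with hT
  set Q : Polynomial (ZMod p) :=
    ∑ j ∈ supp k, Polynomial.C ((k j : ZMod p)) * Polynomial.X ^ (j.val - m.val) with hQ
  have hQdeg : Q.natDegree ≤ M.val - m.val := by
    apply Polynomial.natDegree_sum_le_of_forall_le
    intro j hj
    refine le_trans (Polynomial.natDegree_C_mul_le _ _) ?_
    rw [Polynomial.natDegree_X_pow]
    exact Nat.sub_le_sub_right (Finset.le_max' _ j hj) m.val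
  have hmle : ∀ j ∈ supp k, m.val ≤ j.val := fun j hj => Finset.min'_le _ j hj
  have hcoeff : Q.coeff (j₀.val - m.val) = ((k j₀ : ZMod p)) := by
    rw [hQ, Polynomial.finset_sum_coeff, Finset.sum_eq_single j₀]
    · simp [Polynomial.coeff_C_mul, Polynomial.coeff_X_pow]
    · intro j hj hjne
      simp only [Polynomial.coeff_C_mul, Polynomial.coeff_X_pow]
      have h1 := hmle j hj
      have h2 := hmle j₀ hj₀s
      have h3 : j.val ≠ j₀.val := fun h => hjne (Fin.ext h)
      rw [if_neg (by omega), mul_zero]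
    · intro h; exact absurd hj₀s h
  have hk0 : ((k j₀ : ZMod p)) ≠ 0 := by
    rw [Ne, ZMod.intCast_zmod_eq_zero_iff_dvd]; exact hj₀
  have hQ0 : Q ≠ 0 := fun h => hk0 (by rw [← hcoeff, h, Polynomial.coeff_zero])
  have hp0 : (0:ℕ) < p := hp.pos
  have heval : ∀ l : ℕ, 0 < l → l < p → ((p:ℤ) ∣ ∑ j, k j * (l:ℤ)^(j.val+1)) →
      Q.eval ((l : ZMod p)) = 0 := by
    intro l hl0 hlp hdl
    have hlz : ((l : ZMod p)) ≠ 0 := by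
      rw [Ne, ZMod.natCast_eq_zero_iff]
      intro h; exact absurd (Nat.le_of_dvd hl0 h) (by omega)
    have hcast : ((∑ j, k j * (l:ℤ)^(j.val+1) : ℤ) : ZMod p) = 0 := by
      rw [ZMod.intCast_zmod_eq_zero_iff_dvd]; exact hdl
    push_cast at hcast
    have hres : (∑ j, (k j : ZMod p) * (l:ZMod p)^(j.val+1))
        = ∑ j ∈ supp k, (k j : ZMod p) * (l:ZMod p)^(j.val+1) := by
      rw [supp]
      refine (Finset.sum_filter_of_ne ?_).symm
      intro j _ hfj hkj
      exact hfj (by simp [hkj])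
    have hsplit : (∑ j, (k j : ZMod p) * (l:ZMod p)^(j.val+1))
        = (l : ZMod p)^(m.val+1) * Q.eval ((l:ZMod p)) := by
      rw [hres, hQ, Polynomial.eval_finset_sum]
      simp only [Polynomial.eval_mul, Polynomial.eval_C, Polynomial.eval_pow, Polynomial.eval_X]
      rw [Finset.mul_sum]
      refine Finset.sum_congr rfl fun j hj => ?_
      have := hmle j hj
      rw [← mul_assoc, mul_comm ((l:ZMod p)^(m.val+1)) _, mul_assoc, ← pow_add]
      congr 2
      omega
    rw [hsplit] at hcast
    rcases mul_eq_zero.mp hcast with h | h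
    · exact absurd h (pow_ne_zero _ hlz)
    · exact h
  have hTsub : T ⊆ insert 0 (T.filter (fun l => l ≠ 0)) := by
    intro l hl
    by_cases h : l = 0
    · simp [h]
    · exact Finset.mem_insert_of_mem (Finset.mem_filter.mpr ⟨hl, h⟩)
  have hcard1 : (T.filter (fun l => l ≠ 0)).card ≤ Q.roots.toFinset.card := by
    refine Finset.card_le_card_of_injOn (fun l => ((l : ℕ) : ZMod p)) ?_ ?_
    · intro l hl
      simp only [Finset.mem_coe] at hl ⊢
      rw [Finset.mem_filter, hT, Finset.mem_filter, Finset.mem_range] at hl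
      obtain ⟨⟨hlp, hdl⟩, hl0⟩ := hl
      rw [Multiset.mem_toFinset, Polynomial.mem_roots hQ0]
      exact heval l (Nat.pos_of_ne_zero hl0) hlp hdl
    · intro a ha b hb hab
      simp only [Finset.mem_coe, Finset.mem_filter, hT, Finset.mem_range] at ha hb
      have hv : ((a:ℕ):ZMod p).val = ((b:ℕ):ZMod p).val := congrArg ZMod.val hab
      rw [ZMod.val_cast_of_lt ha.1.1, ZMod.val_cast_of_lt hb.1.1] at hv
      exact hv
  have hcard2 : Q.roots.toFinset.card ≤ M.val - m.val :=
    le_trans (Multiset.toFinset_card_le _) (le_trans (Polynomial.card_roots' Q) hQdeg)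
  calc T.card ≤ (insert 0 (T.filter (fun l => l ≠ 0))).card := Finset.card_le_card hTsub
    _ ≤ (T.filter (fun l => l ≠ 0)).card + 1 := Finset.card_insert_le _ _
    _ ≤ (M.val - m.val) + 1 := by omega
    _ = width k := by rw [width, dif_pos hne]

theorem korobov_second_exponential_sum (d p : ℕ) (hd : 1 ≤ d) (hp : p.Prime) (hpd : d ≤ p)
    (k : Fin d → ℤ) (hk : k ≠ 0) (hdvd : ∃ j, ¬ (p : ℤ) ∣ k j) :
    ‖(1 / ((p : ℂ) ^ 2)) * ∑ h ∈ Finset.range p, ∑ l ∈ Finset.range p,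
        e2pi ((h : ℂ) * (∑ j, (k j : ℂ) * (l : ℂ) ^ (j.val + 1)) / (p : ℂ))‖
      ≤ (width k : ℝ) / p := by
  classical
  have hp0 : (0:ℕ) < p := hp.pos
  have hpc : (p:ℂ) ≠ 0 := Nat.cast_ne_zero.mpr hp0.ne'
  set T := ((Finset.range p).filter (fun (l:ℕ) => (p:ℤ) ∣ ∑ j, k j * (l:ℤ)^(j.val+1))) with hT
  have hsum : (∑ h ∈ Finset.range p, ∑ l ∈ Finset.range p,
      e2pi ((h : ℂ) * (∑ j, (k j : ℂ) * (l : ℂ) ^ (j.val + 1)) / (p : ℂ)))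
      = (T.card : ℂ) * p := by
    rw [Finset.sum_comm]
    have hinner : ∀ l ∈ Finset.range p, (∑ h ∈ Finset.range p,
        e2pi ((h : ℂ) * (∑ j, (k j : ℂ) * (l : ℂ) ^ (j.val + 1)) / (p : ℂ)))
        = if (p:ℤ) ∣ (∑ j, k j * (l:ℤ)^(j.val+1)) then (p:ℂ) else 0 := by
      intro l _
      have harg : ((∑ j, k j * (l:ℤ)^(j.val+1) : ℤ) : ℂ)
          = ∑ j, (k j : ℂ) * (l : ℂ) ^ (j.val + 1) := by
        push_cast; ring
      rw [← sum_e2pi p hp0 (∑ j, k j * (l:ℤ)^(j.val+1))]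
      refine Finset.sum_congr rfl fun h _ => ?_
      rw [harg]
    rw [Finset.sum_congr rfl hinner, Finset.sum_ite, Finset.sum_const, Finset.sum_const_zero,
      add_zero, ← hT, nsmul_eq_mul]
  rw [hsum]
  have hTcard : T.card ≤ width k := card_divisors_bound d p hp k hdvd
  have hnorm : ‖(1 / ((p : ℂ) ^ 2)) * ((T.card : ℂ) * p)‖ = (T.card : ℝ) / p := by
    have : (1 / ((p : ℂ) ^ 2)) * ((T.card : ℂ) * p) = (T.card : ℂ) / p := by
      field_simp
    rw [this, norm_div, Complex.norm_natCast, Complex.norm_natCast]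
  rw [hnorm]
  have hpr : (0:ℝ) < p := Nat.cast_pos.mpr hp0
  apply div_le_div_of_nonneg_right ?_ hpr.le
  exact_mod_cast hTcard

end
end

section
/- For any linear algorithm Q_{d,n}(f) = ∑_{h=0}^{n−1} w_h f(x_h) using n function values, any finite set A ⊂ ℤ^d with |A| > n satisfies: the worst-case error of Q_{d,n} over the unit ball of F_d¹ is at least (max_{ℓ∈A} ∑_{k∈A} max(1, min_{j∈supp(k−ℓ)} log|k_j − ℓ_j|))^{−1}. -/
open Finset

noncomputable section

/-- The weight `max(1, min_{j ∈ supp k} log |k_j|)` defining the norm of `F_d¹`. -/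
noncomputable def weight1 {d : ℕ} (k : Fin d → ℤ) : ℝ := max 1 (logmin k)

lemma one_le_weight1 {d : ℕ} (k : Fin d → ℤ) : 1 ≤ weight1 k := le_max_left _ _

lemma weight1_nonneg {d : ℕ} (k : Fin d → ℤ) : 0 ≤ weight1 k :=
  le_trans zero_le_one (one_le_weight1 k)

lemma weight1_neg {d : ℕ} (k : Fin d → ℤ) : weight1 (-k) = weight1 k := by
  have hsupp : supp (-k) = supp k := by
    simp [supp, Finset.filter_congr]
  unfold weight1 logmin
  rw [hsupp]
  split_ifs with h
  · congr 1
    refine Finset.inf'_congr h rfl fun j _ => ?_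
    simp
  · rfl

lemma E_add {d : ℕ} (a b : Fin d → ℤ) (y : Fin d → ℝ) :
    e2pi (∑ j, ((a + b) j : ℂ) * (y j : ℂ))
      = e2pi (∑ j, (a j : ℂ) * (y j : ℂ)) * e2pi (∑ j, (b j : ℂ) * (y j : ℂ)) := by
  unfold e2pi
  rw [← Complex.exp_add]
  congr 1
  rw [← mul_add, ← Finset.sum_add_distrib]
  congr 1
  refine Finset.sum_congr rfl fun j _ => ?_
  simp only [Pi.add_apply]
  push_cast
  ring

lemma E_star {d : ℕ} (m : Fin d → ℤ) (y : Fin d → ℝ) :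
    star (e2pi (∑ j, (m j : ℂ) * (y j : ℂ)))
      = e2pi (∑ j, ((-m) j : ℂ) * (y j : ℂ)) := by
  unfold e2pi
  rw [show (star (Complex.exp (2 * Real.pi * Complex.I * ∑ j, (m j : ℂ) * (y j : ℂ))))
      = (starRingEnd ℂ) (Complex.exp (2 * Real.pi * Complex.I * ∑ j, (m j : ℂ) * (y j : ℂ)))
      from rfl, ← Complex.exp_conj]
  congr 1
  have h1 : (∑ j, ((-m) j : ℂ) * (y j : ℂ)) = -∑ j, (m j : ℂ) * (y j : ℂ) := by
    rw [← Finset.sum_neg_distrib]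
    refine Finset.sum_congr rfl fun j _ => ?_
    simp only [Pi.neg_apply]
    push_cast
    ring
  rw [h1]
  simp only [map_mul, map_sum, Complex.conj_I, Complex.conj_ofReal, map_ofNat, map_intCast]
  ring

lemma E_cont {d : ℕ} (m : Fin d → ℤ) :
    Continuous fun y : Fin d → ℝ => e2pi (∑ j, (m j : ℂ) * (y j : ℂ)) := by
  unfold e2pi
  refine Complex.continuous_exp.comp (continuous_const.mul ?_)
  exact continuous_finset_sum _ fun j _ =>
    continuous_const.mul (Complex.continuous_ofReal.comp (continuous_apply j))

open MeasureTheory in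
lemma int1d (m : ℤ) : (∫ t in Set.Ico (0:ℝ) 1, e2pi (m * t)) = if m = 0 then 1 else 0 := by
  rw [setIntegral_congr_set MeasureTheory.Ico_ae_eq_Ioc,
    ← intervalIntegral.integral_of_le zero_le_one]
  split_ifs with h
  · simp [h, e2pi]
  · have hc : (2 * Real.pi * Complex.I * m) ≠ 0 := by
      simp [Real.pi_ne_zero, Complex.I_ne_zero, h]
    have key := integral_exp_mul_complex (a := 0) (b := 1) hc
    simp only [e2pi]
    rw [show (fun t : ℝ => Complex.exp (2 * Real.pi * Complex.I * (m * t)))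
        = fun t : ℝ => Complex.exp ((2 * Real.pi * Complex.I * m) * t) by funext t; ring_nf]
    rw [key]
    rw [show ((2:ℂ) * Real.pi * Complex.I * m) * (1:ℝ)
        = m * (2 * Real.pi * Complex.I) by push_cast; ring]
    simp [Complex.exp_int_mul_two_pi_mul_I]

open MeasureTheory in
lemma intd {d : ℕ} (m : Fin d → ℤ) :
    (∫ y in Set.univ.pi fun _ : Fin d => Set.Ico (0:ℝ) 1,
      e2pi (∑ j, (m j : ℂ) * (y j : ℂ))) = if m = 0 then 1 else 0 := by
  have hbox : MeasurableSet (Set.univ.pi fun _ : Fin d => Set.Ico (0:ℝ) 1) :=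
    MeasurableSet.univ_pi fun _ => measurableSet_Ico
  rw [← integral_indicator hbox]
  have h1 : ∀ y : Fin d → ℝ,
      (Set.univ.pi fun _ : Fin d => Set.Ico (0:ℝ) 1).indicator
        (fun y => e2pi (∑ j, (m j : ℂ) * (y j : ℂ))) y
      = ∏ j, (Set.Ico (0:ℝ) 1).indicator (fun t => e2pi (m j * t)) (y j) := by
    intro y
    have hprod : e2pi (∑ j, (m j : ℂ) * (y j : ℂ)) = ∏ j, e2pi (m j * y j) := by
      simp only [e2pi, Finset.mul_sum, Complex.exp_sum]
    by_cases hy : y ∈ Set.univ.pi fun _ : Fin d => Set.Ico (0:ℝ) 1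
    · rw [Set.indicator_of_mem hy, hprod]
      refine Finset.prod_congr rfl fun j _ => ?_
      rw [Set.indicator_of_mem (hy j (Set.mem_univ j))]
    · rw [Set.indicator_of_notMem hy]
      simp only [Set.mem_pi, Set.mem_univ, forall_true_left, not_forall] at hy
      obtain ⟨j, hj⟩ := hy
      refine (Finset.prod_eq_zero (Finset.mem_univ j) ?_).symm
      rw [Set.indicator_of_notMem hj]
  simp_rw [h1]
  rw [MeasureTheory.integral_fintype_prod_volume_eq_prod (ι := Fin d)
    (fun j => (Set.Ico (0:ℝ) 1).indicator (fun t => e2pi (m j * t)))]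
  have h2 : ∀ j, (∫ t, (Set.Ico (0:ℝ) 1).indicator (fun t => e2pi (m j * t)) t)
      = if m j = 0 then 1 else 0 := by
    intro j
    rw [integral_indicator measurableSet_Ico, int1d]
  simp_rw [h2]
  by_cases hm : m = 0
  · simp [hm]
  · rw [if_neg hm]
    obtain ⟨j, hj⟩ : ∃ j, m j ≠ 0 := by
      by_contra h; push_neg at h; exact hm (funext h)
    exact Finset.prod_eq_zero (Finset.mem_univ j) (by rw [if_neg hj])

open MeasureTheory in
theorem lower_bound_fooling_set (d n : ℕ) (hd : 1 ≤ d)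
    (x : Fin n → Fin d → ℝ) (w : Fin n → ℝ)
    (A : Finset (Fin d → ℤ)) (hA : n < A.card) :
    ∃ (f : (Fin d → ℝ) → ℝ) (fhat : (Fin d → ℤ) → ℂ),
      Continuous f ∧
      Summable (fun k : Fin d → ℤ => ‖fhat k‖ * weight1 k) ∧
      (∀ y : Fin d → ℝ,
        (f y : ℂ) = ∑' k : Fin d → ℤ, fhat k * e2pi (∑ j, (k j : ℂ) * (y j : ℂ))) ∧
      (∑' k : Fin d → ℤ, ‖fhat k‖ * weight1 k) ≤ 1 ∧
      (A.sup' (Finset.card_pos.mp (by omega)) fun ℓ => ∑ k ∈ A, weight1 (k - ℓ))⁻¹ ≤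
        |(∫ y in Set.univ.pi fun _ : Fin d => Set.Ico (0 : ℝ) 1, f y) -
          ∑ h : Fin n, w h * f (x h)| := by
  have hA0 : A.Nonempty := Finset.card_pos.mp (by omega)
  haveI : Nonempty {k // k ∈ A} := ⟨⟨hA0.choose, hA0.choose_spec⟩⟩
  set M : Matrix (Fin n) {k // k ∈ A} ℂ :=
    fun h k => e2pi (∑ j, ((k : Fin d → ℤ) j : ℂ) * (x h j : ℂ)) with hM
  obtain ⟨c, hc0, hker⟩ : ∃ c : {k // k ∈ A} → ℂ, c ≠ 0 ∧ M.mulVec c = 0 := by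
    have hni : ¬ Function.Injective M.mulVecLin := by
      intro hinj
      have h1 := LinearMap.finrank_le_finrank_of_injective hinj
      rw [Module.finrank_pi, Module.finrank_pi, Fintype.card_coe, Fintype.card_fin] at h1
      omega
    obtain ⟨a, b, hab, hne⟩ := Function.not_injective_iff.mp hni
    refine ⟨a - b, sub_ne_zero_of_ne hne, ?_⟩
    have h2 : M.mulVecLin (a - b) = 0 := by rw [map_sub, hab, sub_self]
    simpa [Matrix.mulVecLin_apply] using h2
  obtain ⟨ℓ₀, -, hmax⟩ := Finset.exists_max_image (Finset.univ : Finset {k // k ∈ A})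
    (fun k => ‖c k‖) Finset.univ_nonempty
  have hmax' : ∀ k : {k // k ∈ A}, ‖c k‖ ≤ ‖c ℓ₀‖ := fun k => hmax k (Finset.mem_univ k)
  have hcl : c ℓ₀ ≠ 0 := by
    intro h
    apply hc0
    funext k
    have h2 := hmax' k
    rw [h, norm_zero] at h2
    exact norm_le_zero_iff.mp h2
  set ℓ : Fin d → ℤ := (ℓ₀ : Fin d → ℤ) with hldef
  have hlA : ℓ ∈ A := ℓ₀.2
  set S : ℝ := ∑ k ∈ A, weight1 (k - ℓ) with hSdef
  have hS1 : 1 ≤ S := by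
    have h1 : (A.card : ℝ) ≤ S := by
      simpa using Finset.sum_le_sum (fun k (_ : k ∈ A) => one_le_weight1 (k - ℓ))
    have h2 : (1:ℝ) ≤ A.card := by exact_mod_cast hA0.card_pos
    linarith
  have hS0 : (0:ℝ) < S := lt_of_lt_of_le one_pos hS1
  have hSC : (S : ℂ) ≠ 0 := by exact_mod_cast hS0.ne'
  set C : (Fin d → ℤ) → ℂ := (fun k => if hk : k ∈ A then c ⟨k, hk⟩ else 0) with hCdef
  set u : (Fin d → ℤ) → ℂ := (fun m => C (m + ℓ) / (c ℓ₀ * S)) with hudef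
  set B : Finset (Fin d → ℤ) := A.image (· - ℓ) with hBdef
  set B2 : Finset (Fin d → ℤ) := B ∪ B.image (fun m => -m) with hB2def
  have hmemB : ∀ m, m ∈ B ↔ m + ℓ ∈ A := by
    intro m
    simp only [hBdef, Finset.mem_image]
    constructor
    · rintro ⟨k, hk, rfl⟩; simpa using hk
    · intro h; exact ⟨m + ℓ, h, by simp⟩
  have hu0 : ∀ m ∉ B, u m = 0 := by
    intro m hm
    have h1 : m + ℓ ∉ A := fun h => hm ((hmemB m).mpr h)
    simp only [hudef, hCdef, dif_neg h1, zero_div]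
  set fhat : (Fin d → ℤ) → ℂ := (fun m => (u m + star (u (-m))) / 2) with hfhatdef
  have hfhat0 : ∀ m ∉ B2, fhat m = 0 := by
    intro m hm
    have hmB : m ∉ B := fun h => hm (Finset.mem_union_left _ h)
    have hmnB : -m ∉ B := by
      intro h
      exact hm (Finset.mem_union_right _ (Finset.mem_image.mpr ⟨-m, h, neg_neg m⟩))
    simp [hfhatdef, hu0 m hmB, hu0 _ hmnB]
  have hB2sym : ∀ m ∈ B2, -m ∈ B2 := by
    intro m hm
    rcases Finset.mem_union.mp hm with h | h
    · exact Finset.mem_union_right _ (Finset.mem_image.mpr ⟨m, h, rfl⟩)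
    · obtain ⟨m', hm', rfl⟩ := Finset.mem_image.mp h
      exact Finset.mem_union_left _ (by simpa using hm')
  set g : (Fin d → ℝ) → ℂ :=
    (fun y => ∑ m ∈ B, u m * e2pi (∑ j, (m j : ℂ) * (y j : ℂ))) with hgdef
  set f : (Fin d → ℝ) → ℝ := (fun y => (g y).re) with hfdef
  have hinjsub : ∀ a ∈ A, ∀ b ∈ A, a - ℓ = b - ℓ → a = b := by
    intro a _ b _ h
    exact sub_left_injective h
  have hgA : ∀ y : Fin d → ℝ, g y
      = ∑ k ∈ A, (C k / (c ℓ₀ * S)) * e2pi (∑ j, ((k - ℓ) j : ℂ) * (y j : ℂ)) := by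
    intro y
    simp only [hgdef, hBdef]
    rw [Finset.sum_image hinjsub]
    refine Finset.sum_congr rfl fun k hk => ?_
    congr 2
    simp only [hudef]
    rw [sub_add_cancel]
  have hgcont : Continuous g := by
    simp only [hgdef]
    exact continuous_finset_sum _ fun m _ => continuous_const.mul (E_cont m)
  have hfcont : Continuous f := Complex.continuous_re.comp hgcont
  -- the tsum representation
  have hrep : ∀ y : Fin d → ℝ,
      ((f y : ℝ) : ℂ) = ∑' m : Fin d → ℤ, fhat m * e2pi (∑ j, (m j : ℂ) * (y j : ℂ)) := by
    intro y
    rw [tsum_eq_sum (s := B2) (fun m hm => by rw [hfhat0 m hm, zero_mul])]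
    have h1 : ∑ m ∈ B2, u m * e2pi (∑ j, (m j : ℂ) * (y j : ℂ)) = g y := by
      simp only [hgdef]
      refine (Finset.sum_subset Finset.subset_union_left fun m _ hm => ?_).symm
      rw [hu0 m hm, zero_mul]
    have h2 : ∑ m ∈ B2, star (u (-m)) * e2pi (∑ j, (m j : ℂ) * (y j : ℂ)) = star (g y) := by
      have h2a : ∑ m ∈ B2, star (u (-m)) * e2pi (∑ j, (m j : ℂ) * (y j : ℂ))
          = ∑ m ∈ B2, star (u m * e2pi (∑ j, (m j : ℂ) * (y j : ℂ))) := by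
        refine Finset.sum_nbij' (i := fun m => -m) (j := fun m => -m)
          (fun m hm => hB2sym m hm) (fun m hm => hB2sym m hm)
          (fun m _ => neg_neg m) (fun m _ => neg_neg m) ?_
        intro m _
        rw [star_mul', E_star, neg_neg]
      rw [h2a, ← star_sum, h1]
    have hsplit : ∑ m ∈ B2, fhat m * e2pi (∑ j, (m j : ℂ) * (y j : ℂ))
        = ((∑ m ∈ B2, u m * e2pi (∑ j, (m j : ℂ) * (y j : ℂ)))
          + ∑ m ∈ B2, star (u (-m)) * e2pi (∑ j, (m j : ℂ) * (y j : ℂ))) / 2 := by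
      rw [← Finset.sum_add_distrib, Finset.sum_div]
      refine Finset.sum_congr rfl fun m _ => ?_
      simp only [hfhatdef]
      ring
    rw [hsplit, h1, h2]
    rw [show (star (g y)) = (starRingEnd ℂ) (g y) from rfl, Complex.add_conj]
    simp only [hfdef]
    push_cast
    ring
  -- summability
  have hsummand0 : ∀ m ∉ B2, ‖fhat m‖ * weight1 m = 0 := fun m hm => by
    rw [hfhat0 m hm, norm_zero, zero_mul]
  have hsumm : Summable (fun m : Fin d → ℤ => ‖fhat m‖ * weight1 m) :=
    summable_of_ne_finset_zero hsummand0
  -- norm bound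
  have hnorm : (∑' m : Fin d → ℤ, ‖fhat m‖ * weight1 m) ≤ 1 := by
    rw [tsum_eq_sum hsummand0]
    have hkey : ∑ m ∈ B2, ‖u m‖ * weight1 m ≤ 1 := by
      have hsub : ∑ m ∈ B2, ‖u m‖ * weight1 m = ∑ m ∈ B, ‖u m‖ * weight1 m :=
        (Finset.sum_subset Finset.subset_union_left fun m _ hm => by
          rw [hu0 m hm, norm_zero, zero_mul]).symm
      rw [hsub, hBdef, Finset.sum_image hinjsub]
      have hle : ∀ k ∈ A, ‖u (k - ℓ)‖ * weight1 (k - ℓ) ≤ weight1 (k - ℓ) / S := by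
        intro k hk
        have hCk : C (k - ℓ + ℓ) = c ⟨k, hk⟩ := by
          rw [sub_add_cancel]
          simp only [hCdef, dif_pos hk]
        have hub : ‖u (k - ℓ)‖ ≤ 1 / S := by
          have hnorm_eq : ‖u (k - ℓ)‖ = ‖c ⟨k, hk⟩‖ / (‖c ℓ₀‖ * S) := by
            simp only [hudef, hCk, norm_div, norm_mul, Complex.norm_real,
              Real.norm_of_nonneg hS0.le]
          rw [hnorm_eq, div_le_div_iff₀ (mul_pos (norm_pos_iff.mpr hcl) hS0) hS0]
          calc ‖c ⟨k, hk⟩‖ * S ≤ ‖c ℓ₀‖ * S := by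
                exact mul_le_mul_of_nonneg_right (hmax' _) hS0.le
            _ = 1 * (‖c ℓ₀‖ * S) := by ring
        calc ‖u (k - ℓ)‖ * weight1 (k - ℓ) ≤ (1 / S) * weight1 (k - ℓ) :=
              mul_le_mul_of_nonneg_right hub (weight1_nonneg _)
          _ = weight1 (k - ℓ) / S := by ring
      calc ∑ k ∈ A, ‖u (k - ℓ)‖ * weight1 (k - ℓ) ≤ ∑ k ∈ A, weight1 (k - ℓ) / S :=
            Finset.sum_le_sum hle
        _ = S / S := by rw [← Finset.sum_div, ← hSdef]
        _ = 1 := div_self hS0.ne'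
    have hstep : ∑ m ∈ B2, ‖fhat m‖ * weight1 m ≤ ∑ m ∈ B2, ‖u m‖ * weight1 m := by
      have hre : ∑ m ∈ B2, ‖u (-m)‖ * weight1 (-m) = ∑ m ∈ B2, ‖u m‖ * weight1 m := by
        refine Finset.sum_nbij' (i := fun m => -m) (j := fun m => -m)
          (fun m hm => hB2sym m hm) (fun m hm => hB2sym m hm)
          (fun m _ => neg_neg m) (fun m _ => neg_neg m) ?_
        intro m _
        rfl
      have hhalf : ∀ m ∈ B2, ‖fhat m‖ * weight1 m
          ≤ (‖u m‖ * weight1 m + ‖u (-m)‖ * weight1 (-m)) / 2 := by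
        intro m _
        rw [weight1_neg]
        have h1 : ‖fhat m‖ ≤ (‖u m‖ + ‖u (-m)‖) / 2 := by
          simp only [hfhatdef]
          rw [norm_div]
          have : ‖(2:ℂ)‖ = 2 := by norm_num
          rw [this]
          have h2 := norm_add_le (u m) (star (u (-m)))
          rw [norm_star] at h2
          linarith
        have h3 : 0 ≤ weight1 m := weight1_nonneg m
        nlinarith [norm_nonneg (u m), norm_nonneg (u (-m))]
      calc ∑ m ∈ B2, ‖fhat m‖ * weight1 m
          ≤ ∑ m ∈ B2, (‖u m‖ * weight1 m + ‖u (-m)‖ * weight1 (-m)) / 2 :=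
            Finset.sum_le_sum hhalf
        _ = ((∑ m ∈ B2, ‖u m‖ * weight1 m) + ∑ m ∈ B2, ‖u (-m)‖ * weight1 (-m)) / 2 := by
            rw [← Finset.sum_div, Finset.sum_add_distrib]
        _ = ∑ m ∈ B2, ‖u m‖ * weight1 m := by rw [hre]; ring
    linarith
  -- integrability
  have hcptIcc : IsCompact (Set.univ.pi fun _ : Fin d => Set.Icc (0:ℝ) 1) :=
    isCompact_univ_pi fun _ => isCompact_Icc
  have hsubset : (Set.univ.pi fun _ : Fin d => Set.Ico (0:ℝ) 1)
      ⊆ Set.univ.pi fun _ : Fin d => Set.Icc (0:ℝ) 1 :=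
    Set.pi_mono fun i _ => Set.Ico_subset_Icc_self
  have hint : ∀ (F : (Fin d → ℝ) → ℂ), Continuous F →
      IntegrableOn F (Set.univ.pi fun _ : Fin d => Set.Ico (0:ℝ) 1) volume :=
    fun F hF => (hF.continuousOn.integrableOn_compact hcptIcc).mono_set hsubset
  -- integral of g
  have hIg : (∫ y in Set.univ.pi fun _ : Fin d => Set.Ico (0:ℝ) 1, g y) = ((1/S : ℝ) : ℂ) := by
    simp only [hgdef]
    rw [MeasureTheory.integral_finset_sum _ (fun m _ =>
      ((hint _ (E_cont m)).const_mul (u m)))]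
    have h1 : ∀ m ∈ B, (∫ y in Set.univ.pi fun _ : Fin d => Set.Ico (0:ℝ) 1,
        u m * e2pi (∑ j, (m j : ℂ) * (y j : ℂ))) = u m * (if m = 0 then 1 else 0) := by
      intro m _
      rw [MeasureTheory.integral_const_mul, intd]
    rw [Finset.sum_congr rfl h1]
    simp only [mul_ite, mul_one, mul_zero]
    rw [Finset.sum_ite_eq' B 0 u]
    have h0B : (0 : Fin d → ℤ) ∈ B := (hmemB 0).mpr (by simpa using hlA)
    rw [if_pos h0B]
    have hC0 : C (0 + ℓ) = c ℓ₀ := by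
      rw [zero_add]
      simp only [hCdef, dif_pos hlA]
      rfl
    simp only [hudef, hC0]
    rw [div_mul_eq_div_div, div_self hcl]
    push_cast
    ring
  -- integral of f
  have hIf : (∫ y in Set.univ.pi fun _ : Fin d => Set.Ico (0:ℝ) 1, f y) = 1/S := by
    have h1 : (∫ y in Set.univ.pi fun _ : Fin d => Set.Ico (0:ℝ) 1, f y)
        = (∫ y in Set.univ.pi fun _ : Fin d => Set.Ico (0:ℝ) 1, g y).re := by
      have h2 := integral_re (hint g hgcont)
      simp only [RCLike.re_to_complex] at h2
      simp only [hfdef]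
      exact h2
    rw [h1, hIg, Complex.ofReal_re]
  -- vanishing at nodes
  have hnode : ∀ h : Fin n, f (x h) = 0 := by
    intro h
    have hg0 : g (x h) = 0 := by
      rw [hgA (x h)]
      have hsplit : ∀ k ∈ A, (C k / (c ℓ₀ * S)) * e2pi (∑ j, ((k - ℓ) j : ℂ) * (x h j : ℂ))
          = (e2pi (∑ j, ((-ℓ) j : ℂ) * (x h j : ℂ)) / (c ℓ₀ * S))
            * (e2pi (∑ j, (k j : ℂ) * (x h j : ℂ)) * C k) := by
        intro k _
        rw [show k - ℓ = k + (-ℓ) from sub_eq_add_neg k ℓ, E_add]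
        ring
      rw [Finset.sum_congr rfl hsplit, ← Finset.mul_sum]
      have hker' : ∑ k ∈ A, e2pi (∑ j, (k j : ℂ) * (x h j : ℂ)) * C k = 0 := by
        have h2 := congrFun hker h
        simp only [Matrix.mulVec, dotProduct, Pi.zero_apply, hM] at h2
        rw [← h2, ← Finset.sum_coe_sort A
          (fun k => e2pi (∑ j, (k j : ℂ) * (x h j : ℂ)) * C k)]
        refine Finset.sum_congr rfl fun k _ => ?_
        have hCk : C (k : Fin d → ℤ) = c k := by
          simp only [hCdef, dif_pos k.2]
        rw [hCk]
      rw [hker', mul_zero]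
    simp only [hfdef, hg0, Complex.zero_re]
  refine ⟨f, fhat, hfcont, hsumm, hrep, hnorm, ?_⟩
  have hQ : ∑ h : Fin n, w h * f (x h) = 0 := by simp [hnode]
  rw [hQ, sub_zero, hIf, abs_of_pos (by positivity)]
  have hle : S ≤ A.sup' (Finset.card_pos.mp (by omega)) fun ℓ' => ∑ k ∈ A, weight1 (k - ℓ') := by
    rw [hSdef]
    exact Finset.le_sup' (fun ℓ' => ∑ k ∈ A, weight1 (k - ℓ')) hlA
  calc (A.sup' (Finset.card_pos.mp (by omega)) fun ℓ' => ∑ k ∈ A, weight1 (k - ℓ'))⁻¹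
      ≤ S⁻¹ := by
        apply inv_anti₀ hS0 hle
    _ = 1/S := (one_div S).symm
end
end

section
/- For any linear algorithm Q_{d,n} using n function values, with d ≥ 1 and n > 2d, the worst-case error over the unit ball of F_d¹ satisfies e^{wor}(F_d¹, Q_{d,n}) ≥ d/(2n²). -/
open Finset

noncomputable section

/-! ### Auxiliary lemmas -/

lemma supp_neg {d : ℕ} (k : Fin d → ℤ) : supp (-k) = supp k := by
  simp [supp]

lemma weight1_le_log {d : ℕ} (k : Fin d → ℤ) (M : ℕ)
    (hk : ∀ j, |k j| ≤ (M : ℤ)) : weight1 k ≤ max 1 (Real.log M) := by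
  unfold weight1
  apply max_le (le_max_left _ _)
  unfold logmin
  by_cases h : (supp k).Nonempty
  · rw [dif_pos h]
    refine le_trans ?_ (le_max_right _ _)
    obtain ⟨j, hj⟩ := h
    refine le_trans (Finset.inf'_le _ hj) ?_
    have hj0 : k j ≠ 0 := by simpa [supp] using hj
    apply Real.log_le_log
    · rw [abs_pos]
      exact_mod_cast hj0
    · rw [← Int.cast_abs]
      exact_mod_cast hk j
  · rw [dif_neg h]
    exact le_trans zero_le_one (le_max_left _ _)

lemma e2pi_add (a b : ℂ) : e2pi (a + b) = e2pi a * e2pi b := by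
  rw [e2pi, e2pi, e2pi, ← Complex.exp_add]; ring_nf

lemma e2pi_zero : e2pi 0 = 1 := by simp [e2pi]

lemma conj_e2pi_real (t : ℝ) : (starRingEnd ℂ) (e2pi (t : ℂ)) = e2pi (-(t:ℂ)) := by
  rw [e2pi, e2pi, ← Complex.exp_conj]
  congr 1
  simp only [map_mul, Complex.conj_I, Complex.conj_ofReal, map_ofNat]
  ring

lemma norm_e2pi_real (t : ℝ) : ‖e2pi (t:ℂ)‖ = 1 := by
  rw [e2pi]
  rw [Complex.norm_exp]
  have : (2 * ↑Real.pi * Complex.I * ↑t).re = 0 := by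
    simp [Complex.mul_re, Complex.I_re, Complex.I_im]
  simp [this]

open MeasureTheory in
lemma integral_e2pi_Ico (m : ℤ) :
    ∫ t in Set.Ico (0:ℝ) 1, e2pi ((m:ℂ) * (t:ℂ)) = if m = 0 then 1 else 0 := by
  by_cases hm : m = 0
  · subst hm
    simp only [Int.cast_zero, zero_mul, e2pi_zero, if_pos rfl]
    rw [setIntegral_const]
    simp [Real.volume_Ico]
  · rw [if_neg hm]
    have h1 : ∫ t in Set.Ico (0:ℝ) 1, e2pi ((m:ℂ) * (t:ℂ))
        = ∫ t in Set.Ioc (0:ℝ) 1, e2pi ((m:ℂ) * (t:ℂ)) := by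
      rw [integral_Ico_eq_integral_Ioo, integral_Ioc_eq_integral_Ioo]
    rw [h1, ← intervalIntegral.integral_of_le (by norm_num : (0:ℝ) ≤ 1)]
    have hc : (2 * (Real.pi:ℂ) * Complex.I * m) ≠ 0 := by
      simp [Real.pi_ne_zero, Complex.I_ne_zero, hm]
    have : ∀ t : ℝ, e2pi ((m:ℂ) * (t:ℂ)) = Complex.exp ((2 * (Real.pi:ℂ) * Complex.I * m) * t) := by
      intro t; rw [e2pi]; ring_nf
    simp_rw [this]
    rw [integral_exp_mul_complex hc]
    have : (2 * (Real.pi:ℂ) * Complex.I * m) * (1:ℝ) = m * (2 * Real.pi * Complex.I) := by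
      push_cast; ring
    rw [this]
    rw [Complex.exp_int_mul_two_pi_mul_I]
    simp

lemma e2pi_sum {ι : Type*} (s : Finset ι) (a : ι → ℂ) :
    e2pi (∑ j ∈ s, a j) = ∏ j ∈ s, e2pi (a j) := by
  rw [e2pi, mul_sum, Complex.exp_sum]
  rfl

open MeasureTheory in
lemma integral_e2pi_box (d : ℕ) (v : Fin d → ℤ) :
    ∫ y in Set.univ.pi (fun _ : Fin d => Set.Ico (0:ℝ) 1),
      e2pi (∑ j, (v j : ℂ) * (y j : ℂ)) = if v = 0 then 1 else 0 := by
  have hbox : MeasurableSet (Set.univ.pi (fun _ : Fin d => Set.Ico (0:ℝ) 1)) :=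
    MeasurableSet.univ_pi (fun _ => measurableSet_Ico)
  rw [← integral_indicator hbox]
  have key : (Set.univ.pi (fun _ : Fin d => Set.Ico (0:ℝ) 1)).indicator
        (fun y : Fin d → ℝ => e2pi (∑ j, (v j : ℂ) * (y j : ℂ)))
      = fun y : Fin d → ℝ => ∏ j,
          (Set.Ico (0:ℝ) 1).indicator (fun t : ℝ => e2pi ((v j : ℂ) * (t:ℂ))) (y j) := by
    funext y
    by_cases hy : y ∈ Set.univ.pi (fun _ : Fin d => Set.Ico (0:ℝ) 1)
    · rw [Set.indicator_of_mem hy, e2pi_sum]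
      refine Finset.prod_congr rfl (fun j _ => ?_)
      rw [Set.indicator_of_mem (hy j (Set.mem_univ j))]
    · rw [Set.indicator_of_notMem hy]
      rw [Set.mem_pi] at hy
      push_neg at hy
      obtain ⟨j, _, hj⟩ := hy
      rw [eq_comm]
      apply Finset.prod_eq_zero (Finset.mem_univ j)
      rw [Set.indicator_of_notMem hj]
  rw [key]
  rw [MeasureTheory.integral_fintype_prod_volume_eq_prod
    (fun j (t : ℝ) => (Set.Ico (0:ℝ) 1).indicator (fun s : ℝ => e2pi ((v j : ℂ) * (s:ℂ))) t)]
  have : ∀ j : Fin d, (∫ t : ℝ,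
      (Set.Ico (0:ℝ) 1).indicator (fun s : ℝ => e2pi ((v j : ℂ) * (s:ℂ))) t)
      = if v j = 0 then 1 else 0 := by
    intro j
    rw [integral_indicator measurableSet_Ico, integral_e2pi_Ico]
  simp_rw [this]
  by_cases hv : v = 0
  · simp [hv]
  · rw [if_neg hv]
    have : ∃ j, v j ≠ 0 := by
      by_contra h
      push_neg at h
      exact hv (funext h)
    obtain ⟨j, hj⟩ := this
    exact Finset.prod_eq_zero (Finset.mem_univ j) (if_neg hj)

/-- Index type for the fooling set. -/
abbrev idx (d M : ℕ) := Option (Fin d × Fin M)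

/-- Frequency vectors of the fooling set. -/
def kap {d M : ℕ} (i : idx d M) : Fin d → ℤ :=
  i.elim 0 (fun p j' => if j' = p.1 then (p.2 : ℤ) + 1 else 0)

lemma kap_inj {d M : ℕ} : Function.Injective (kap (d := d) (M := M)) := by
  intro a b hab
  match a, b with
  | none, none => rfl
  | none, some q =>
    exfalso
    have := congrFun hab q.1
    simp [kap] at this
    omega
  | some p, none =>
    exfalso
    have := congrFun hab p.1
    simp [kap] at this
    omega
  | some p, some q =>
    have h1 := congrFun hab p.1
    simp only [kap, Option.elim, if_pos rfl, if_true] at h1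
    by_cases hpq : p.1 = q.1
    · rw [if_pos hpq] at h1
      have h2 : (p.2 : ℤ) = (q.2 : ℤ) := by omega
      have h3 : p.2 = q.2 := by
        apply Fin.ext
        exact_mod_cast h2
      obtain ⟨p1, p2⟩ := p
      obtain ⟨q1, q2⟩ := q
      simp only at hpq h3
      rw [hpq, h3]
    · rw [if_neg hpq] at h1
      exfalso
      omega

lemma kap_range {d M : ℕ} (i : idx d M) (j : Fin d) : 0 ≤ kap i j ∧ kap i j ≤ (M : ℤ) := by
  match i with
  | none => simp [kap]
  | some p =>
    simp only [kap, Option.elim]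
    by_cases h : j = p.1
    · rw [if_pos h]
      have := p.2.2
      omega
    · rw [if_neg h]; omega

lemma card_idx (d n : ℕ) (hd : 1 ≤ d) (hn : 2 * d < n) :
    n < Fintype.card (idx d (n / d + 1)) := by
  simp only [Fintype.card_option, Fintype.card_prod, Fintype.card_fin]
  have h1 : d * (n / d) ≤ n := Nat.mul_div_le n d
  have h2 : d * (n / d + 1) = d * (n / d) + d := by ring
  have h3 : d * (n / d) + n % d = n := Nat.div_add_mod n d
  have h4 : n % d < d := Nat.mod_lt n hd
  omega

lemma exists_kernel {ι : Type*} [Fintype ι] (n : ℕ) (hcard : n < Fintype.card ι)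
    (E : ι → Fin n → ℂ) : ∃ c : ι → ℂ, c ≠ 0 ∧ ∀ h, ∑ i, c i * E i h = 0 := by
  let L : (ι → ℂ) →ₗ[ℂ] (Fin n → ℂ) :=
  { toFun := fun c => fun h => ∑ i, c i * E i h
    map_add' := by
      intro a b; funext h
      simp [add_mul, Finset.sum_add_distrib]
    map_smul' := by
      intro r a; funext h
      simp [Finset.mul_sum, mul_assoc] }
  have hni : ¬ Function.Injective L := by
    intro hinj
    have hle := LinearMap.finrank_le_finrank_of_injective hinj
    rw [Module.finrank_fintype_fun_eq_card, Module.finrank_fintype_fun_eq_card,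
      Fintype.card_fin] at hle
    omega
  rw [Function.not_injective_iff] at hni
  obtain ⟨a, b, hab, hne⟩ := hni
  refine ⟨a - b, sub_ne_zero_of_ne hne, fun h => ?_⟩
  have h0 : L (a - b) = 0 := by rw [map_sub, hab, sub_self]
  have := congrFun h0 h
  simpa [L, sub_mul, Finset.sum_sub_distrib] using this

lemma numeric_bound (d n : ℕ) (hd : 1 ≤ d) (hn : 2 * d < n) :
    (d : ℝ) / (2 * (n:ℝ) ^ 2)
      * ((Fintype.card (idx d (n / d + 1)) : ℝ) * max 1 (Real.log ((n / d + 1 : ℕ) : ℝ))) ≤ 1 := by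
  have hd0 : (0:ℝ) < d := by positivity
  have hn0 : (0:ℝ) < n := by
    have : 0 < n := by omega
    positivity
  have hA : ((Fintype.card (idx d (n / d + 1)) : ℕ) : ℝ) ≤ 2 * n := by
    have hnat : Fintype.card (idx d (n / d + 1)) ≤ 2 * n := by
      simp only [Fintype.card_option, Fintype.card_prod, Fintype.card_fin]
      have h1 : d * (n / d) ≤ n := Nat.mul_div_le n d
      have h2 : d * (n / d + 1) = d * (n / d) + d := by ring
      omega
    exact_mod_cast hnat
  have hB : max 1 (Real.log ((n / d + 1 : ℕ) : ℝ)) ≤ (n:ℝ) / d := by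
    apply max_le
    · rw [le_div_iff₀ hd0, one_mul]
      have : d ≤ n := by omega
      exact_mod_cast this
    · have hpos : (0:ℝ) < ((n / d + 1 : ℕ) : ℝ) := by positivity
      calc Real.log ((n / d + 1 : ℕ) : ℝ) ≤ ((n / d + 1 : ℕ) : ℝ) - 1 :=
            Real.log_le_sub_one_of_pos hpos
        _ = ((n / d : ℕ) : ℝ) := by push_cast; ring
        _ ≤ (n:ℝ) / d := Nat.cast_div_le
  have hmaxnn : (0:ℝ) ≤ max 1 (Real.log ((n / d + 1 : ℕ) : ℝ)) :=
    le_trans zero_le_one (le_max_left _ _)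
  have hfact : ((Fintype.card (idx d (n / d + 1)) : ℕ) : ℝ)
      * max 1 (Real.log ((n / d + 1 : ℕ) : ℝ)) ≤ (2 * n) * ((n:ℝ) / d) :=
    mul_le_mul hA hB hmaxnn (by positivity)
  have heq : (d : ℝ) / (2 * (n:ℝ) ^ 2) * ((2 * n) * ((n:ℝ) / d)) = 1 := by
    field_simp
  calc (d : ℝ) / (2 * (n:ℝ) ^ 2)
      * ((Fintype.card (idx d (n / d + 1)) : ℝ) * max 1 (Real.log ((n / d + 1 : ℕ) : ℝ)))
      ≤ (d : ℝ) / (2 * (n:ℝ) ^ 2) * ((2 * n) * ((n:ℝ) / d)) :=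
        mul_le_mul_of_nonneg_left hfact (by positivity)
    _ = 1 := heq

open MeasureTheory in
theorem lower_bound_Fd1 (d n : ℕ) (hd : 1 ≤ d) (hn : 2 * d < n)
    (x : Fin n → Fin d → ℝ) (w : Fin n → ℝ) :
    ∃ (f : (Fin d → ℝ) → ℝ) (fhat : (Fin d → ℤ) → ℂ),
      Continuous f ∧
      Summable (fun k : Fin d → ℤ => ‖fhat k‖ * weight1 k) ∧
      (∀ y : Fin d → ℝ,
        (f y : ℂ) = ∑' k : Fin d → ℤ, fhat k * e2pi (∑ j, (k j : ℂ) * (y j : ℂ))) ∧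
      (∑' k : Fin d → ℤ, ‖fhat k‖ * weight1 k) ≤ 1 ∧
      (d : ℝ) / (2 * n ^ 2) ≤
        |(∫ y in Set.univ.pi fun _ : Fin d => Set.Ico (0 : ℝ) 1, f y) -
          ∑ h : Fin n, w h * f (x h)| := by
  classical
  set M : ℕ := n / d + 1 with hMdef
  -- the kernel element
  obtain ⟨c, hc, hker⟩ := exists_kernel (ι := idx d M) n (card_idx d n hd hn)
    (fun i h => e2pi (∑ j, (kap i j : ℂ) * (x h j : ℂ)))
  -- maximizer of |c i|
  obtain ⟨i₀, -, hmax⟩ := Finset.exists_max_image (univ : Finset (idx d M))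
    (fun i => ‖c i‖) ⟨none, mem_univ _⟩
  have hc₀ : c i₀ ≠ 0 := by
    intro h0
    apply hc
    funext i
    have := hmax i (mem_univ i)
    rw [h0] at this
    simp only [norm_zero] at this
    have : ‖c i‖ = 0 := le_antisymm this (norm_nonneg _)
    simpa using this
  set cc : idx d M → ℂ := fun i => c i / c i₀ with hccdef
  have hcc1 : cc i₀ = 1 := div_self hc₀
  have hccle : ∀ i, ‖cc i‖ ≤ 1 := by
    intro i
    have hpos : (0:ℝ) < ‖c i₀‖ := norm_pos_iff.mpr hc₀
    rw [hccdef]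
    simp only [norm_div]
    rw [div_le_one hpos]
    exact hmax i (mem_univ i)
  have hkerc : ∀ h, ∑ i, cc i * e2pi (∑ j, (kap i j : ℂ) * (x h j : ℂ)) = 0 := by
    intro h
    simp only [hccdef, div_mul_eq_mul_div, ← Finset.sum_div]
    rw [hker h, zero_div]
  set ks : Fin d → ℤ := kap i₀ with hksdef
  set S : Finset (Fin d → ℤ) :=
    ((univ : Finset (idx d M)).image fun i => kap i - ks) ∪
    ((univ : Finset (idx d M)).image fun i => ks - kap i) with hSdef
  have hmemS1 : ∀ i : idx d M, kap i - ks ∈ S := fun i =>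
    Finset.mem_union_left _ (Finset.mem_image_of_mem _ (mem_univ i))
  have hmemS2 : ∀ i : idx d M, ks - kap i ∈ S := fun i =>
    Finset.mem_union_right _ (Finset.mem_image_of_mem _ (mem_univ i))
  have hSneg : ∀ v ∈ S, -v ∈ S := by
    intro v hv
    rw [hSdef, Finset.mem_union] at hv
    rcases hv with hv | hv <;> rw [Finset.mem_image] at hv <;> obtain ⟨i, -, hi⟩ := hv
    · rw [← hi, neg_sub]
      exact hmemS2 i
    · rw [← hi, neg_sub]
      exact hmemS1 i
  have hnegsum : ∀ {β : Type} [AddCommMonoid β] (ϕ : (Fin d → ℤ) → β),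
      ∑ v ∈ S, ϕ (-v) = ∑ v ∈ S, ϕ v := by
    intro β _ ϕ
    refine Finset.sum_nbij' (i := fun v => -v) (j := fun v => -v) ?_ ?_ ?_ ?_ ?_
    · intro a ha; exact hSneg a ha
    · intro a ha; exact hSneg a ha
    · intro a _; exact neg_neg a
    · intro a _; exact neg_neg a
    · intro a _; rfl
  set B : (Fin d → ℤ) → ℂ := fun v => ∑ i : idx d M, if kap i - ks = v then cc i else 0
    with hBdef
  set s : ℝ := (d : ℝ) / (2 * (n:ℝ) ^ 2) with hsdef
  have hs0 : 0 < s := by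
    rw [hsdef]
    have : (0:ℝ) < n := by
      have : 0 < n := by omega
      positivity
    positivity
  set fh : (Fin d → ℤ) → ℂ :=
    fun v => ((s/2 : ℝ) : ℂ) * (B v + (starRingEnd ℂ) (B (-v))) with hfhdef
  have hsupp : ∀ v ∉ S, fh v = 0 := by
    intro v hv
    have hB1 : B v = 0 := by
      rw [hBdef]
      apply Finset.sum_eq_zero
      intro i _
      rw [if_neg]
      intro h
      exact hv (h ▸ hmemS1 i)
    have hB2 : B (-v) = 0 := by
      rw [hBdef]
      apply Finset.sum_eq_zero
      intro i _
      rw [if_neg]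
      intro h
      apply hv
      have : v = ks - kap i := by
        have := congrArg Neg.neg h
        rw [neg_neg, neg_sub] at this
        exact this.symm
      rw [this]
      exact hmemS2 i
    rw [hfhdef]
    simp [hB1, hB2]
  set F : (Fin d → ℝ) → ℂ :=
    fun y => ∑ v ∈ S, fh v * e2pi (∑ j, (v j : ℂ) * (y j : ℂ)) with hFdef
  set f : (Fin d → ℝ) → ℝ := fun y => (F y).re with hfdef
  -- cast helper
  have hcast : ∀ (v : Fin d → ℤ) (y : Fin d → ℝ),
      ∑ j, (v j : ℂ) * (y j : ℂ) = ((∑ j, (v j : ℝ) * y j : ℝ) : ℂ) := by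
    intro v y
    push_cast
    rfl
  have hconjE : ∀ (v : Fin d → ℤ) (y : Fin d → ℝ),
      (starRingEnd ℂ) (e2pi (∑ j, (v j : ℂ) * (y j : ℂ)))
        = e2pi (∑ j, ((-v) j : ℂ) * (y j : ℂ)) := by
    intro v y
    have hneg : -(∑ j, (v j : ℝ) * y j) = ∑ j, ((-v) j : ℝ) * y j := by
      rw [← Finset.sum_neg_distrib]
      exact Finset.sum_congr rfl (fun j _ => by simp)
    rw [hcast v y, conj_e2pi_real, ← Complex.ofReal_neg, hneg, ← hcast (-v) y]
  have hnormE : ∀ (v : Fin d → ℤ) (y : Fin d → ℝ),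
      ‖e2pi (∑ j, (v j : ℂ) * (y j : ℂ))‖ = 1 := by
    intro v y
    rw [hcast]
    exact norm_e2pi_real _
  -- Claim A
  have claimA : ∀ (a : idx d M → ℂ) (y : Fin d → ℝ),
      ∑ v ∈ S, (∑ i : idx d M, if kap i - ks = v then a i else 0)
          * e2pi (∑ j, (v j : ℂ) * (y j : ℂ))
        = ∑ i : idx d M, a i * e2pi (∑ j, (((kap i - ks) j : ℤ) : ℂ) * (y j : ℂ)) := by
    intro a y
    simp_rw [Finset.sum_mul, ite_mul, zero_mul]
    rw [Finset.sum_comm]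
    apply Finset.sum_congr rfl
    intro i _
    rw [Finset.sum_ite_eq S (kap i - ks)
      (fun v => a i * e2pi (∑ j, (v j : ℂ) * (y j : ℂ))), if_pos (hmemS1 i)]
  set G : (Fin d → ℝ) → ℂ :=
    fun y => ∑ i : idx d M, cc i * e2pi (∑ j, (((kap i - ks) j : ℤ) : ℂ) * (y j : ℂ))
    with hGdef
  have hFG : ∀ y, F y = ((s/2 : ℝ) : ℂ) * (G y + (starRingEnd ℂ) (G y)) := by
    intro y
    rw [hFdef]
    simp only [hfhdef]
    simp_rw [mul_assoc, ← Finset.mul_sum]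
    congr 1
    simp_rw [add_mul, Finset.sum_add_distrib]
    congr 1
    · simp only [hBdef, hGdef]
      exact claimA cc y
    · -- ∑ v ∈ S, conj (B (-v)) * e_v y = conj (G y)
      have step1 : ∀ v : Fin d → ℤ, (starRingEnd ℂ) (B (-v)) * e2pi (∑ j, (v j : ℂ) * (y j : ℂ))
          = (starRingEnd ℂ) (B (-v) * e2pi (∑ j, ((-v) j : ℂ) * (y j : ℂ))) := by
        intro v
        rw [map_mul, hconjE, neg_neg]
      simp_rw [step1]
      rw [← map_sum]
      congr 1
      rw [hnegsum (fun u => B u * e2pi (∑ j, (u j : ℂ) * (y j : ℂ)))]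
      simp only [hBdef, hGdef]
      exact claimA cc y
  have hGnode : ∀ h : Fin n, G (x h) = 0 := by
    intro h
    rw [hGdef]
    have hsplit : ∀ i : idx d M,
        e2pi (∑ j, (((kap i - ks) j : ℤ) : ℂ) * (x h j : ℂ))
          = e2pi (-∑ j, ((ks j : ℤ) : ℂ) * (x h j : ℂ))
            * e2pi (∑ j, ((kap i j : ℤ) : ℂ) * (x h j : ℂ)) := by
      intro i
      rw [← e2pi_add]
      congr 1
      simp only [Pi.sub_apply, Int.cast_sub, sub_mul, Finset.sum_sub_distrib]
      ring
    have hre : ∀ i : idx d M,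
        cc i * (e2pi (-∑ j, ((ks j : ℤ) : ℂ) * (x h j : ℂ))
            * e2pi (∑ j, ((kap i j : ℤ) : ℂ) * (x h j : ℂ)))
          = e2pi (-∑ j, ((ks j : ℤ) : ℂ) * (x h j : ℂ))
            * (cc i * e2pi (∑ j, ((kap i j : ℤ) : ℂ) * (x h j : ℂ))) := fun i => by ring
    simp only [hsplit, hre]
    rw [← Finset.mul_sum, hkerc h, mul_zero]
  have hFnode : ∀ h : Fin n, F (x h) = 0 := by
    intro h
    rw [hFG, hGnode h]
    simp
  have hFconj : ∀ y, (starRingEnd ℂ) (F y) = F y := by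
    intro y
    rw [hFG]
    rw [map_mul, Complex.conj_ofReal, map_add, Complex.conj_conj]
    rw [add_comm]
  have h3 : ∀ y, ((f y : ℝ) : ℂ) = F y := by
    intro y
    rw [hfdef]
    exact Complex.conj_eq_iff_re.mp (hFconj y)
  refine ⟨f, fh, ?_, ?_, ?_, ?_, ?_⟩
  · -- continuity
    rw [hfdef]
    apply Complex.continuous_re.comp
    rw [hFdef]
    apply continuous_finset_sum
    intro v _
    apply Continuous.mul continuous_const
    simp only [e2pi]
    apply Complex.continuous_exp.comp
    apply Continuous.mul continuous_const
    apply continuous_finset_sum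
    intro j _
    exact Continuous.mul continuous_const (Complex.continuous_ofReal.comp (continuous_apply j))
  · -- summability
    apply summable_of_finite_support
    apply Set.Finite.subset S.finite_toSet
    intro v hv
    simp only [Function.mem_support] at hv
    by_contra hvS
    rw [hsupp v hvS] at hv
    simp at hv
  · -- representation
    intro y
    rw [tsum_eq_sum (s := S) (fun v hv => by rw [hsupp v hv, zero_mul])]
    exact h3 y
  · -- norm bound
    rw [tsum_eq_sum (s := S) (fun v hv => by rw [hsupp v hv]; simp)]
    have hterm : ∀ v, ‖fh v‖ ≤ (s/2) * (‖B v‖ + ‖B (-v)‖) := by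
      intro v
      rw [hfhdef]
      rw [norm_mul]
      have h1 : ‖((s/2 : ℝ) : ℂ)‖ = s/2 := by
        rw [Complex.norm_real]
        exact abs_of_nonneg (by positivity)
      rw [h1]
      apply mul_le_mul_of_nonneg_left _ (by positivity)
      refine le_trans (norm_add_le _ _) ?_
      rw [RCLike.norm_conj]
    have step1 : ∑ v ∈ S, ‖fh v‖ * weight1 v
        ≤ (s/2) * ((∑ v ∈ S, ‖B v‖ * weight1 v) + (∑ v ∈ S, ‖B (-v)‖ * weight1 v)) := by
      rw [← Finset.sum_add_distrib, Finset.mul_sum]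
      apply Finset.sum_le_sum
      intro v _
      calc ‖fh v‖ * weight1 v ≤ ((s/2) * (‖B v‖ + ‖B (-v)‖)) * weight1 v :=
            mul_le_mul_of_nonneg_right (hterm v) (weight1_nonneg v)
        _ = (s/2) * (‖B v‖ * weight1 v + ‖B (-v)‖ * weight1 v) := by ring
    have step2 : ∑ v ∈ S, ‖B (-v)‖ * weight1 v = ∑ v ∈ S, ‖B v‖ * weight1 v := by
      have := hnegsum (β := ℝ) (fun u => ‖B u‖ * weight1 (-u))
      calc ∑ v ∈ S, ‖B (-v)‖ * weight1 v
          = ∑ v ∈ S, ‖B (-v)‖ * weight1 (- -v) := by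
            apply Finset.sum_congr rfl; intro v _; rw [neg_neg]
        _ = ∑ v ∈ S, ‖B v‖ * weight1 (-v) := this
        _ = ∑ v ∈ S, ‖B v‖ * weight1 v := by
            apply Finset.sum_congr rfl; intro v _; rw [weight1_neg]
    have step3 : ∑ v ∈ S, ‖B v‖ * weight1 v
        ≤ (Fintype.card (idx d M) : ℝ) * max 1 (Real.log (M : ℝ)) := by
      have hBle : ∀ v, ‖B v‖ ≤ ∑ i : idx d M, (if kap i - ks = v then ‖cc i‖ else 0) := by
        intro v
        rw [hBdef]
        refine le_trans (norm_sum_le _ _) ?_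
        apply Finset.sum_le_sum
        intro i _
        by_cases h : kap i - ks = v
        · rw [if_pos h, if_pos h]
        · rw [if_neg h, if_neg h, norm_zero]
      calc ∑ v ∈ S, ‖B v‖ * weight1 v
          ≤ ∑ v ∈ S, (∑ i : idx d M, if kap i - ks = v then ‖cc i‖ * weight1 v else 0) := by
            apply Finset.sum_le_sum
            intro v _
            calc ‖B v‖ * weight1 v
                ≤ (∑ i : idx d M, if kap i - ks = v then ‖cc i‖ else 0) * weight1 v :=
                  mul_le_mul_of_nonneg_right (hBle v) (weight1_nonneg v)
              _ = ∑ i : idx d M, (if kap i - ks = v then ‖cc i‖ * weight1 v else 0) := by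
                  rw [Finset.sum_mul]
                  apply Finset.sum_congr rfl
                  intro i _
                  rw [ite_mul, zero_mul]
        _ = ∑ i : idx d M, ‖cc i‖ * weight1 (kap i - ks) := by
            rw [Finset.sum_comm]
            apply Finset.sum_congr rfl
            intro i _
            rw [Finset.sum_ite_eq S (kap i - ks) (fun v => ‖cc i‖ * weight1 v),
              if_pos (hmemS1 i)]
        _ ≤ ∑ _i : idx d M, 1 * max 1 (Real.log (M : ℝ)) := by
            apply Finset.sum_le_sum
            intro i _
            apply mul_le_mul (hccle i) _ (weight1_nonneg _) zero_le_one
            apply weight1_le_log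
            intro j
            have h1 := kap_range i j
            have h2 := kap_range i₀ j
            rw [Pi.sub_apply]
            rw [hksdef]
            rw [abs_le]
            omega
        _ = (Fintype.card (idx d M) : ℝ) * max 1 (Real.log (M : ℝ)) := by
            rw [Finset.sum_const, card_univ, nsmul_eq_mul, one_mul]
    calc ∑ v ∈ S, ‖fh v‖ * weight1 v
        ≤ (s/2) * ((∑ v ∈ S, ‖B v‖ * weight1 v) + (∑ v ∈ S, ‖B (-v)‖ * weight1 v)) := step1
      _ = s * (∑ v ∈ S, ‖B v‖ * weight1 v) := by rw [step2]; ring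
      _ ≤ s * ((Fintype.card (idx d M) : ℝ) * max 1 (Real.log (M : ℝ))) :=
          mul_le_mul_of_nonneg_left step3 (le_of_lt hs0)
      _ ≤ 1 := by
          rw [hsdef, hMdef]
          exact numeric_bound d n hd hn
  · -- error bound
    have hQ : ∑ h : Fin n, w h * f (x h) = 0 := by
      apply Finset.sum_eq_zero
      intro h _
      rw [hfdef]
      simp only
      rw [hFnode h]
      simp
    have hB0 : B 0 = 1 := by
      simp only [hBdef]
      rw [Finset.sum_eq_single_of_mem i₀ (mem_univ i₀)]
      · rw [if_pos (by rw [hksdef, sub_self]), hcc1]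
      · intro i _ hne
        rw [if_neg]
        intro hcontra
        apply hne
        apply kap_inj
        rw [hksdef] at hcontra
        have := sub_eq_zero.mp hcontra
        exact this
    have hfh0 : fh 0 = ((s : ℝ) : ℂ) := by
      rw [hfhdef]
      simp only [neg_zero, hB0, map_one]
      push_cast
      ring
    have hint : ∀ v : Fin d → ℤ, Integrable
        (fun y : Fin d → ℝ => e2pi (∑ j, (v j : ℂ) * (y j : ℂ)))
        (volume.restrict (Set.univ.pi fun _ : Fin d => Set.Ico (0 : ℝ) 1)) := by
      intro v
      have hvol : volume (Set.univ.pi fun _ : Fin d => Set.Ico (0 : ℝ) 1) < ⊤ := by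
        rw [volume_pi_pi]
        simp [Real.volume_Ico]
      apply Integrable.mono' (g := fun _ => (1:ℝ))
      · exact integrableOn_const hvol.ne
      · apply Continuous.aestronglyMeasurable
        simp only [e2pi]
        apply Complex.continuous_exp.comp
        apply Continuous.mul continuous_const
        apply continuous_finset_sum
        intro j _
        exact Continuous.mul continuous_const (Complex.continuous_ofReal.comp (continuous_apply j))
      · apply Filter.Eventually.of_forall
        intro y
        rw [hnormE]
    have hI : (∫ y in Set.univ.pi fun _ : Fin d => Set.Ico (0 : ℝ) 1, f y) = s := by
      have h1 : (∫ y in Set.univ.pi fun _ : Fin d => Set.Ico (0 : ℝ) 1, F y)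
          = ((∫ y in Set.univ.pi fun _ : Fin d => Set.Ico (0 : ℝ) 1, f y : ℝ) : ℂ) := by
        calc (∫ y in Set.univ.pi fun _ : Fin d => Set.Ico (0 : ℝ) 1, F y)
            = ∫ y in Set.univ.pi fun _ : Fin d => Set.Ico (0 : ℝ) 1, ((f y : ℝ) : ℂ) :=
              integral_congr_ae (Filter.Eventually.of_forall (fun y => (h3 y).symm))
          _ = ((∫ y in Set.univ.pi fun _ : Fin d => Set.Ico (0 : ℝ) 1, f y : ℝ) : ℂ) :=
              integral_ofReal
      have h2 : (∫ y in Set.univ.pi fun _ : Fin d => Set.Ico (0 : ℝ) 1, F y) = ((s : ℝ) : ℂ) := by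
        rw [hFdef]
        simp only
        rw [integral_finset_sum S (fun v _ => (hint v).const_mul (fh v))]
        have : ∀ v ∈ S, (∫ y in Set.univ.pi fun _ : Fin d => Set.Ico (0 : ℝ) 1,
            fh v * e2pi (∑ j, (v j : ℂ) * (y j : ℂ)))
            = fh v * (if v = 0 then 1 else 0) := by
          intro v _
          rw [integral_const_mul, integral_e2pi_box]
        rw [Finset.sum_congr rfl this]
        simp_rw [mul_ite, mul_one, mul_zero]
        rw [Finset.sum_ite_eq' S 0 fh]
        rw [if_pos]
        · exact hfh0
        · have := hmemS1 i₀
          rw [hksdef, sub_self] at this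
          exact this
      have := h1.symm.trans h2
      exact_mod_cast this
    rw [hI, hQ, sub_zero]
    rw [abs_of_nonneg (le_of_lt hs0)]
end
end
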